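/- arXiv:1702.02673 — 3 statements merged into one kernel-verified Lean document; each statement's English description precedes it below -/
import Mathlib

section
/- In the 2-user energy cooperation model with efficiencies α₁₂, α₂₁ ∈ (0,1), for every feasible (δ₁₂, δ₂₁) with δ₁₂, δ₂₁ ≥ 0, there exists a feasible (δ'₁₂, δ'₂₁) with δ'₁₂ * δ'₂₁ = 0 (i.e., at most one direction of transfer) yielding componentwise at least as large transmit powers p₁ and p₂, where p₁ = p̃₁ - δ₁₂/T + α₂₁ δ₂₁/T and p₂ = p̃₂ - δ₂₁/T + α₁₂ δ₁₂/T. -/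
theorem stmt_8 (T pbar1 pbar2 α12 α21 δ12 δ21 : ℝ) (hT : 0 < T)
    (hp1 : 0 ≤ pbar1) (hp2 : 0 ≤ pbar2)
    (hα12 : α12 ∈ Set.Ioo (0 : ℝ) 1) (hα21 : α21 ∈ Set.Ioo (0 : ℝ) 1)
    (hδ12 : 0 ≤ δ12) (hδ21 : 0 ≤ δ21)
    (hb1 : δ12 ≤ T * pbar1) (hb2 : δ21 ≤ T * pbar2)
    (hpt1 : 0 ≤ pbar1 - δ12 / T + α21 * δ21 / T)
    (hpt2 : 0 ≤ pbar2 - δ21 / T + α12 * δ12 / T) :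
    ∃ δ12' δ21' : ℝ, 0 ≤ δ12' ∧ 0 ≤ δ21' ∧ δ12' ≤ T * pbar1 ∧ δ21' ≤ T * pbar2 ∧
      δ12' * δ21' = 0 ∧
      0 ≤ pbar1 - δ12' / T + α21 * δ21' / T ∧
      0 ≤ pbar2 - δ21' / T + α12 * δ12' / T ∧
      pbar1 - δ12 / T + α21 * δ21 / T ≤ pbar1 - δ12' / T + α21 * δ21' / T ∧
      pbar2 - δ21 / T + α12 * δ12 / T ≤ pbar2 - δ21' / T + α12 * δ12' / T := by
  obtain ⟨ha1, ha2⟩ := hα12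
  obtain ⟨hb1', hb2'⟩ := hα21
  have hαα : α12 * α21 < 1 := by nlinarith
  by_cases h : α21 * δ21 ≤ δ12
  · have h2 : α12 * (α21 * δ21) ≤ δ21 := by nlinarith
    have h3 := div_le_div_of_nonneg_right (c := T) h2 hT.le
    have hk2 : pbar2 - 0 / T + α12 * ((δ12 - α21 * δ21)) / T
        = pbar2 + α12 * δ12 / T - α12 * (α21 * δ21) / T := by field_simp; ring
    have hk1 : pbar1 - (δ12 - α21 * δ21) / T + α21 * 0 / T
        = pbar1 - δ12 / T + α21 * δ21 / T := by field_simp; ring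
    refine ⟨δ12 - α21 * δ21, 0, by linarith, le_refl _, by nlinarith, by nlinarith, by ring,
      ?_, ?_, ?_, ?_⟩
    · rw [hk1]; exact hpt1
    · rw [hk2]; linarith
    · rw [hk1]
    · rw [hk2]; linarith
  · push_neg at h
    have hd21' : 0 ≤ δ21 - δ12 / α21 := by
      have : δ12 / α21 ≤ δ21 := by rw [div_le_iff₀ hb1']; nlinarith
      linarith
    have hkey : pbar1 - 0 / T + α21 * (δ21 - δ12 / α21) / T
        = pbar1 - δ12 / T + α21 * δ21 / T := by field_simp; ring
    have h4 : α12 * δ12 ≤ δ12 / α21 := by rw [le_div_iff₀ hb1']; nlinarith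
    have h5 := div_le_div_of_nonneg_right (c := T) h4 hT.le
    have hk2 : pbar2 - (δ21 - δ12 / α21) / T + α12 * 0 / T
        = pbar2 - δ21 / T + δ12 / α21 / T := by field_simp; ring
    have hle : δ21 - δ12 / α21 ≤ δ21 := by linarith [div_nonneg hδ12 hb1'.le]
    refine ⟨0, δ21 - δ12 / α21, le_refl _, hd21', by nlinarith, by linarith, by ring,
      ?_, ?_, ?_, ?_⟩
    · rw [hkey]; exact hpt1
    · rw [hk2]; linarith
    · rw [hkey]
    · rw [hk2]; linarith
end

section
/- Let e : ℕ → ℝ be an i.i.d. sequence of nonnegative integrable random variables with mean ē > 0, and let p̃ < ē. With the save-and-transmit schedule (consume 0 in slots 1..h(N), consume p̃ per slot afterwards, where h : ℕ → ℕ satisfies h(N) → ∞), the probability that energy causality is ever violated, i.e., P(∃ i ≤ N, Σ_{j=1}^i consumed(j) > Σ_{j=1}^i e j), tends to 0 as N → ∞. -/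
open MeasureTheory ProbabilityTheory Filter

theorem stmt_10 {Ω : Type*} [MeasurableSpace Ω] (μ : Measure Ω) [IsProbabilityMeasure μ]
    (e : ℕ → Ω → ℝ) (hmeas : ∀ i, Measurable (e i))
    (hindep : iIndepFun e μ)
    (hident : ∀ i, IdentDistrib (e i) (e 0) μ μ)
    (hnonneg : ∀ i, ∀ ω, 0 ≤ e i ω)
    (hint : Integrable (e 0) μ)
    (ebar : ℝ) (hmean : μ[e 0] = ebar) (hebar : 0 < ebar)
    (pbar : ℝ) (hpbar : pbar < ebar)
    (h : ℕ → ℕ) (hh : Tendsto h atTop atTop) :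
    Tendsto (fun N =>
        μ {ω | ∃ i ≤ N,
          (∑ j ∈ Finset.Icc 1 i, (if j ≤ h N then (0 : ℝ) else pbar)) >
            ∑ j ∈ Finset.Icc 1 i, e j ω})
      atTop (nhds 0) := by
  classical
  set p' : ℝ := max pbar 0 with hp'def
  have hp'0 : 0 ≤ p' := le_max_right _ _
  have hp'lt : p' < ebar := max_lt hpbar hebar
  set C : ℕ → Set Ω :=
    fun m => {ω | ∃ i, m < i ∧ (i : ℝ) * p' > ∑ j ∈ Finset.Icc 1 i, e j ω} with hCdef
  have hCmeas : ∀ m, MeasurableSet (C m) := by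
    intro m
    have : C m = ⋃ i, {ω | m < i ∧ (i : ℝ) * p' > ∑ j ∈ Finset.Icc 1 i, e j ω} := by
      ext ω; simp [hCdef, Set.mem_iUnion]
    rw [this]
    refine MeasurableSet.iUnion fun i => ?_
    by_cases him : m < i
    · simp only [him, true_and]
      exact measurableSet_lt (Finset.measurable_sum _ fun j _ => hmeas j) measurable_const
    · simp [him]
  have hCanti : Antitone C := by
    intro m m' hmm ω hω
    obtain ⟨i, hi, hlt⟩ := hω
    exact ⟨i, lt_of_le_of_lt hmm hi, hlt⟩
  -- strong law
  have hslln := strong_law_ae_real e hint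
    (fun i j hij => hindep.indepFun hij) hident
  rw [hmean] at hslln
  have hiInter : μ (⋂ m, C m) = 0 := by
    rw [measure_eq_zero_iff_ae_notMem]
    filter_upwards [hslln] with ω hω
    intro hmem
    set ε : ℝ := (ebar - p') / 2 with hε
    have hεpos : 0 < ε := by simp only [hε]; linarith
    have hEv : ∀ᶠ n : ℕ in atTop,
        (∑ i ∈ Finset.range n, e i ω) / n > p' + ε := by
      have := hω.eventually (eventually_gt_nhds (show p' + ε < ebar by simp only [hε]; linarith))
      exact this
    obtain ⟨M, hM⟩ := hEv.exists_forall_of_atTop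
    set m : ℕ := max M ⌈(e 0 ω - p') / ε⌉₊ with hm
    obtain ⟨i, hi, hlt⟩ := Set.mem_iInter.mp hmem m
    have hiM : M ≤ i + 1 := le_trans (le_max_left _ _) (le_of_lt (Nat.lt_succ_of_lt hi))
    have hsum : p' + ε < (∑ j ∈ Finset.range (i + 1), e j ω) / ((i + 1 : ℕ) : ℝ) := hM _ hiM
    have hpos : (0 : ℝ) < ((i + 1 : ℕ) : ℝ) := by positivity
    have hsum' : (∑ j ∈ Finset.range (i + 1), e j ω) > ((i : ℝ) + 1) * (p' + ε) := by
      have := (lt_div_iff₀ hpos).mp hsum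
      push_cast at this ⊢
      linarith
    have hsplit : (∑ j ∈ Finset.range (i + 1), e j ω)
        = e 0 ω + ∑ j ∈ Finset.Icc 1 i, e j ω := by
      have hins : Finset.range (i + 1) = insert 0 (Finset.Icc 1 i) := by
        ext j; simp [Nat.lt_succ_iff]; omega
      rw [hins, Finset.sum_insert (by simp)]
    have hceil : ((e 0 ω - p') / ε : ℝ) ≤ (i : ℝ) := by
      have h1 : (⌈(e 0 ω - p') / ε⌉₊ : ℝ) ≤ (i : ℝ) := by
        exact_mod_cast le_of_lt (lt_of_le_of_lt (le_max_right M _) hi)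
      exact le_trans (Nat.le_ceil _) h1
    have he0 : e 0 ω - p' ≤ ε * i := by
      have := (div_le_iff₀ hεpos).mp hceil
      linarith
    -- derive contradiction with hlt : i * p' > ∑ Icc
    have : (i : ℝ) * p' < (i : ℝ) * p' := by
      calc (i : ℝ) * p' ≤ ((i : ℝ) + 1) * (p' + ε) - e 0 ω := by nlinarith
        _ < ∑ j ∈ Finset.Icc 1 i, e j ω := by rw [hsplit] at hsum'; linarith
        _ < (i : ℝ) * p' := hlt
    exact lt_irrefl _ this
  have htend : Tendsto (fun m => μ (C m)) atTop (nhds 0) := by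
    have := tendsto_measure_iInter_atTop (μ := μ)
      (fun m => (hCmeas m).nullMeasurableSet) hCanti ⟨0, measure_ne_top μ _⟩
    rwa [hiInter] at this
  have hcomp : Tendsto (fun N => μ (C (h N))) atTop (nhds 0) := htend.comp hh
  -- squeeze
  refine tendsto_of_tendsto_of_tendsto_of_le_of_le tendsto_const_nhds hcomp
    (fun N => zero_le) ?_
  intro N
  refine measure_mono ?_
  intro ω hω
  obtain ⟨i, hiN, hlt⟩ := hω
  have hsum_nonneg : 0 ≤ ∑ j ∈ Finset.Icc 1 i, e j ω :=
    Finset.sum_nonneg fun j _ => hnonneg j ω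
  have hile : h N < i := by
    by_contra hle
    push_neg at hle
    have hz : (∑ j ∈ Finset.Icc 1 i, (if j ≤ h N then (0 : ℝ) else pbar)) = 0 := by
      apply Finset.sum_eq_zero; intro j hj
      have : j ≤ h N := le_trans (Finset.mem_Icc.mp hj).2 hle
      simp [this]
    rw [hz] at hlt
    linarith
  refine ⟨i, hile, ?_⟩
  have hb : (∑ j ∈ Finset.Icc 1 i, (if j ≤ h N then (0 : ℝ) else pbar)) ≤ (i : ℝ) * p' := by
    calc (∑ j ∈ Finset.Icc 1 i, (if j ≤ h N then (0 : ℝ) else pbar))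
        ≤ ∑ _j ∈ Finset.Icc 1 i, p' := by
          refine Finset.sum_le_sum fun j _ => ?_
          split
          · exact hp'0
          · exact le_max_left _ _
      _ = (i : ℝ) * p' := by
          rw [Finset.sum_const, Nat.card_Icc]
          simp [nsmul_eq_mul]
  linarith
end

section
/- Let F be a compact set of feasible power vectors p ∈ (ℝ≥0)^K and define C = ⋃_{p ∈ F} C(p) where C(p) = {R ∈ (ℝ≥0)^K | ∀ S, Σ_{k∈S} R k ≤ (1/2) log(1 + Σ_{k∈S} p k)}. Then C is compact; if moreover F is convex, then C is convex. -/
private lemma log_combo (a b l m : ℝ) (ha : 0 ≤ a) (hb : 0 ≤ b)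
    (hl : 0 ≤ l) (hm : 0 ≤ m) (hlm : l + m = 1) :
    l * ((1/2) * Real.log (1 + a)) + m * ((1/2) * Real.log (1 + b))
      ≤ (1/2) * Real.log (1 + (l * a + m * b)) := by
  have hc := (strictConcaveOn_log_Ioi.concaveOn).2
    (x := 1 + a) (y := 1 + b) (by simp [Set.mem_Ioi]; linarith) (by simp [Set.mem_Ioi]; linarith)
    hl hm hlm
  simp only [smul_eq_mul] at hc
  have : l * (1 + a) + m * (1 + b) = 1 + (l * a + m * b) := by ring_nf; linarith
  rw [this] at hc
  nlinarith [hc]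

theorem stmt_19 (K : ℕ) (F : Set (Fin K → ℝ)) (hF : IsCompact F)
    (hFnonneg : ∀ p ∈ F, ∀ k, 0 ≤ p k) :
    let C : Set (Fin K → ℝ) := ⋃ p ∈ F, {R | (∀ k, 0 ≤ R k) ∧
      ∀ S : Finset (Fin K), ∑ k ∈ S, R k ≤ (1 / 2) * Real.log (1 + ∑ k ∈ S, p k)}
    IsCompact C ∧ (Convex ℝ F → Convex ℝ C) := by
  intro C
  -- bound on F
  obtain ⟨M₀, hM₀⟩ := hF.exists_bound_of_continuousOn continuousOn_id
  set M : ℝ := max M₀ 0 with hMdef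
  have hM : ∀ p ∈ F, ∀ k, p k ≤ M := by
    intro p hp k
    have h1 : ‖p‖ ≤ M₀ := by simpa using hM₀ p hp
    have h2 : |p k| ≤ ‖p‖ := by
      simpa using norm_le_pi_norm p k
    calc p k ≤ |p k| := le_abs_self _
      _ ≤ M₀ := h1.trans' h2
      _ ≤ M := le_max_left _ _
  have hM0 : 0 ≤ M := le_max_right _ _
  -- equivalence of the log inequality with an exp inequality
  have key : ∀ p ∈ F, ∀ (R : Fin K → ℝ) (S : Finset (Fin K)),
      (∑ k ∈ S, R k ≤ (1 / 2) * Real.log (1 + ∑ k ∈ S, p k)) ↔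
      Real.exp (2 * ∑ k ∈ S, R k) ≤ 1 + ∑ k ∈ S, p k := by
    intro p hp R S
    have hpos : (0:ℝ) < 1 + ∑ k ∈ S, p k := by
      have : (0:ℝ) ≤ ∑ k ∈ S, p k := Finset.sum_nonneg fun k _ => hFnonneg p hp k
      linarith
    rw [← Real.le_log_iff_exp_le hpos]
    constructor <;> intro h <;> linarith
  -- the set D
  set c : Fin K → ℝ := fun _ => (1/2) * Real.log (1 + M) with hcdef
  set D : Set ((Fin K → ℝ) × (Fin K → ℝ)) :=
    {x | x.1 ∈ F ∧ (∀ k, 0 ≤ x.2 k) ∧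
      ∀ S : Finset (Fin K), Real.exp (2 * ∑ k ∈ S, x.2 k) ≤ 1 + ∑ k ∈ S, x.1 k} with hDdef
  have hDclosed : IsClosed D := by
    have h1 : IsClosed {x : (Fin K → ℝ) × (Fin K → ℝ) | x.1 ∈ F} :=
      hF.isClosed.preimage continuous_fst
    have h2 : IsClosed {x : (Fin K → ℝ) × (Fin K → ℝ) | ∀ k, 0 ≤ x.2 k} := by
      rw [Set.setOf_forall]
      exact isClosed_iInter fun k =>
        isClosed_le continuous_const ((continuous_apply k).comp continuous_snd)
    have h3 : IsClosed {x : (Fin K → ℝ) × (Fin K → ℝ) |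
        ∀ S : Finset (Fin K), Real.exp (2 * ∑ k ∈ S, x.2 k) ≤ 1 + ∑ k ∈ S, x.1 k} := by
      rw [Set.setOf_forall]
      refine isClosed_iInter fun S => isClosed_le ?_ ?_
      · exact (Real.continuous_exp.comp (continuous_const.mul
          (continuous_finset_sum S fun k _ => (continuous_apply k).comp continuous_snd)))
      · exact continuous_const.add
          (continuous_finset_sum S fun k _ => (continuous_apply k).comp continuous_fst)
    have : D = {x | x.1 ∈ F} ∩ ({x | ∀ k, 0 ≤ x.2 k} ∩ {x |
        ∀ S : Finset (Fin K), Real.exp (2 * ∑ k ∈ S, x.2 k) ≤ 1 + ∑ k ∈ S, x.1 k}) := by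
      ext x; simp [hDdef, and_assoc]
    rw [this]
    exact h1.inter (h2.inter h3)
  have hDsub : D ⊆ F ×ˢ Set.Icc 0 c := by
    rintro ⟨p, R⟩ ⟨hp, hR0, hRS⟩
    refine ⟨hp, fun k => hR0 k, fun k => ?_⟩
    have h := hRS {k}
    simp only [Finset.sum_singleton] at h
    have hle : Real.exp (2 * R k) ≤ 1 + M := h.trans (by linarith [hM p hp k])
    have := (Real.le_log_iff_exp_le (by linarith)).mpr hle
    simp only [hcdef]
    linarith
  have hDcompact : IsCompact D :=
    (hF.prod isCompact_Icc).of_isClosed_subset hDclosed hDsub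
  have hCeq : C = Prod.snd '' D := by
    ext R
    constructor
    · intro hR
      rw [Set.mem_iUnion₂] at hR
      obtain ⟨p, hp, hR0, hRS⟩ := hR
      exact ⟨(p, R), ⟨hp, hR0, fun S => (key p hp R S).mp (hRS S)⟩, rfl⟩
    · rintro ⟨⟨p, R'⟩, ⟨hp, hR0, hRS⟩, rfl⟩
      rw [Set.mem_iUnion₂]
      exact ⟨p, hp, hR0, fun S => (key p hp R' S).mpr (hRS S)⟩
  constructor
  · rw [hCeq]; exact hDcompact.image continuous_snd
  · intro hFconv
    rintro a ha b hb l m hl hm hlm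
    rw [Set.mem_iUnion₂] at ha hb ⊢
    obtain ⟨p, hp, ha0, haS⟩ := ha
    obtain ⟨q, hq, hb0, hbS⟩ := hb
    refine ⟨l • p + m • q, hFconv hp hq hl hm hlm, ?_, ?_⟩
    · intro k
      have := ha0 k; have := hb0 k
      simp only [Pi.add_apply, Pi.smul_apply, smul_eq_mul]
      positivity
    · intro S
      have h1 := haS S
      have h2 := hbS S
      have hps : 0 ≤ ∑ k ∈ S, p k := Finset.sum_nonneg fun k _ => hFnonneg p hp k
      have hqs : 0 ≤ ∑ k ∈ S, q k := Finset.sum_nonneg fun k _ => hFnonneg q hq k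
      have hcomb := log_combo (∑ k ∈ S, p k) (∑ k ∈ S, q k) l m hps hqs hl hm hlm
      have hsum1 : ∑ k ∈ S, (l • a + m • b) k = l * ∑ k ∈ S, a k + m * ∑ k ∈ S, b k := by
        simp [Finset.mul_sum, Finset.sum_add_distrib]
      have hsum2 : ∑ k ∈ S, (l • p + m • q) k = l * ∑ k ∈ S, p k + m * ∑ k ∈ S, q k := by
        simp [Finset.mul_sum, Finset.sum_add_distrib]
      rw [hsum1, hsum2]
      nlinarith [mul_le_mul_of_nonneg_left h1 hl, mul_le_mul_of_nonneg_left h2 hm]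
end
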